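/- Let k ≥ 1 be an integer and ξ > 0 a real number. Let Ξ : ℕ → ℕ → ℝ satisfy 0 ≤ Ξ i j for all i, j, Ξ i j = 0 whenever |i − j| > k (Ξ is (2k+1)-diagonal), and Ξ i j ≤ ξ·(i + j) for all i, j. Then for every finitely supported x : ℕ → ℝ and every real z with 0 ≤ z < 1/(ξ(4k² + 2k)), the series Σ_{n=0}^∞ zⁿ ‖Ξⁿ x‖₂ / n! converges. In other words, every finitely supported vector is an analytic vector for Ξ with radius of convergence at least 1/(ξ(4k²+2k)). (Part (i) of the paper's proposition on analytic vectors for banded scalar matrices of linear growth.) -/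
import Mathlib


/-- The action of an infinite matrix `Ξ` on a vector `y : ℕ → ℝ`:
`(Ξ·y) i = Σ_j Ξ i j · y j`. -/
noncomputable def matVec (Ξ : ℕ → ℕ → ℝ) (y : ℕ → ℝ) : ℕ → ℝ :=
  fun i => ∑' j : ℕ, Ξ i j * y j

/-- The ℓ²-norm of a vector `y : ℕ → ℝ`. -/
noncomputable def l2Norm (y : ℕ → ℝ) : ℝ :=
  Real.sqrt (∑' i : ℕ, (y i) ^ 2)

open Finset in
lemma banded_step (k : ℕ) (ξ : ℝ) (hξ : 0 ≤ ξ) (Ξ : ℕ → ℕ → ℝ)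
    (hnn : ∀ i j : ℕ, 0 ≤ Ξ i j)
    (hband : ∀ i j : ℕ, (k : ℤ) < |(i : ℤ) - (j : ℤ)| → Ξ i j = 0)
    (hgrow : ∀ i j : ℕ, Ξ i j ≤ ξ * ((i : ℝ) + (j : ℝ)))
    (y : ℕ → ℝ) (M : ℕ) (C : ℝ)
    (hsupp : ∀ j, M ≤ j → y j = 0) (hbd : ∀ j, |y j| ≤ C) :
    (∀ i, M + k ≤ i → matVec Ξ y i = 0) ∧
    (∀ i, |matVec Ξ y i| ≤ (2 * (k : ℝ) + 1) * (ξ * (2 * (M : ℝ) + (k : ℝ))) * C) := by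
  have hC : 0 ≤ C := le_trans (abs_nonneg _) (hbd 0)
  have hrep : ∀ i, matVec Ξ y i = ∑ j ∈ Icc (i - k) (i + k), Ξ i j * y j := by
    intro i
    refine tsum_eq_sum ?_
    intro j hj
    rw [mem_Icc] at hj
    have hb : Ξ i j = 0 := by
      apply hband
      rw [lt_abs]
      omega
    rw [hb, zero_mul]
  constructor
  · intro i hi
    rw [hrep]
    apply Finset.sum_eq_zero
    intro j hj
    rw [mem_Icc] at hj
    rw [hsupp j (by omega), mul_zero]
  · intro i
    rw [hrep]
    have hterm : ∀ j ∈ Icc (i - k) (i + k), |Ξ i j * y j| ≤ ξ * (2 * (M : ℝ) + (k : ℝ)) * C := by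
      intro j hj
      rw [mem_Icc] at hj
      by_cases hy : y j = 0
      · rw [hy, mul_zero, abs_zero]
        positivity
      · have hjM : j < M := by
          by_contra h
          exact hy (hsupp j (by omega))
        rw [abs_mul, abs_of_nonneg (hnn i j)]
        have h1 : Ξ i j ≤ ξ * (2 * (M : ℝ) + (k : ℝ)) := by
          refine le_trans (hgrow i j) ?_
          apply mul_le_mul_of_nonneg_left _ hξ
          have h2 : i + j ≤ 2 * M + k := by omega
          exact_mod_cast h2
        exact mul_le_mul h1 (hbd j) (abs_nonneg _) (by positivity)
    have hcard : (((Icc (i - k) (i + k)).card : ℝ)) ≤ 2 * (k : ℝ) + 1 := by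
      have : (Icc (i - k) (i + k)).card ≤ 2 * k + 1 := by
        rw [Nat.card_Icc]; omega
      exact_mod_cast this
    calc |∑ j ∈ Icc (i - k) (i + k), Ξ i j * y j|
        ≤ ∑ j ∈ Icc (i - k) (i + k), |Ξ i j * y j| := Finset.abs_sum_le_sum_abs _ _
      _ ≤ (Icc (i - k) (i + k)).card • (ξ * (2 * (M : ℝ) + (k : ℝ)) * C) :=
          Finset.sum_le_card_nsmul _ _ _ hterm
      _ ≤ (2 * (k : ℝ) + 1) * (ξ * (2 * (M : ℝ) + (k : ℝ))) * C := by
          rw [nsmul_eq_mul, ← mul_assoc]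
          apply mul_le_mul_of_nonneg_right _ hC
          apply mul_le_mul_of_nonneg_right hcard (by positivity)

lemma banded_iter (k : ℕ) (ξ : ℝ) (hξ : 0 ≤ ξ) (Ξ : ℕ → ℕ → ℝ)
    (hnn : ∀ i j : ℕ, 0 ≤ Ξ i j)
    (hband : ∀ i j : ℕ, (k : ℤ) < |(i : ℤ) - (j : ℤ)| → Ξ i j = 0)
    (hgrow : ∀ i j : ℕ, Ξ i j ≤ ξ * ((i : ℝ) + (j : ℝ)))
    (x : ℕ → ℝ) (M : ℕ) (C : ℝ)
    (hsupp : ∀ j, M ≤ j → x j = 0) (hbd : ∀ j, |x j| ≤ C) (n : ℕ) :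
    (∀ i, M + n * k ≤ i → (matVec Ξ)^[n] x i = 0) ∧
    (∀ i, |(matVec Ξ)^[n] x i| ≤ C * ∏ m ∈ Finset.range n,
      ((2 * (k : ℝ) + 1) * (ξ * (2 * ((M : ℝ) + (m : ℝ) * (k : ℝ)) + (k : ℝ))))) := by
  induction n with
  | zero =>
    constructor
    · intro i hi
      simpa using hsupp i (by omega)
    · intro i
      simpa using hbd i
  | succ n ih =>
    obtain ⟨h1, h2⟩ := ih
    obtain ⟨g1, g2⟩ := banded_step k ξ hξ Ξ hnn hband hgrow ((matVec Ξ)^[n] x) (M + n * k) _ h1 h2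
    constructor
    · intro i hi
      rw [Function.iterate_succ_apply']
      refine g1 i ?_
      rw [show (n + 1) * k = n * k + k from by ring] at hi
      omega
    · intro i
      rw [Function.iterate_succ_apply']
      refine le_trans (g2 i) (le_of_eq ?_)
      rw [Finset.prod_range_succ]
      push_cast
      ring

lemma prod_add_le_aux (c n : ℕ) (hc : 1 ≤ c) :
    ∏ m ∈ Finset.range n, (m + c) ≤ (n + c) ^ c * n.factorial := by
  have h1 : ∏ m ∈ Finset.range n, (m + c) = c.ascFactorial n := by
    induction n with
    | zero => simp
    | succ n ih => rw [Finset.prod_range_succ, ih, Nat.ascFactorial_succ]; ring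
  rw [h1, Nat.ascFactorial_eq_factorial_mul_choose', mul_comm]
  apply Nat.mul_le_mul_right
  have hsymm : (c + n - 1).choose n = (c + n - 1).choose (c - 1) := by
    rw [← Nat.choose_symm (by omega : n ≤ c + n - 1)]
    congr 1
    omega
  rw [hsymm]
  calc (c + n - 1).choose (c - 1) ≤ (c + n - 1) ^ (c - 1) := Nat.choose_le_pow _ _
    _ ≤ (n + c) ^ (c - 1) := Nat.pow_le_pow_left (by omega) _
    _ ≤ (n + c) ^ c := Nat.pow_le_pow_right (by omega) (by omega)

lemma l2_bound_aux (y : ℕ → ℝ) (M : ℕ) (B : ℝ) (hB : 0 ≤ B)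
    (hsupp : ∀ i, M ≤ i → y i = 0) (hbd : ∀ i, |y i| ≤ B) :
    l2Norm y ≤ Real.sqrt M * B := by
  unfold l2Norm
  have h1 : ∑' i : ℕ, (y i) ^ 2 = ∑ i ∈ Finset.range M, (y i) ^ 2 := by
    refine tsum_eq_sum ?_
    intro i hi
    rw [hsupp i (by simpa using hi)]
    ring
  have h2 : ∑ i ∈ Finset.range M, (y i) ^ 2 ≤ (M : ℝ) * B ^ 2 := by
    calc ∑ i ∈ Finset.range M, (y i) ^ 2
        ≤ (Finset.range M).card • (B ^ 2) := by
          apply Finset.sum_le_card_nsmul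
          intro i _
          rw [← sq_abs]
          exact pow_le_pow_left₀ (abs_nonneg _) (hbd i) 2
      _ = (M : ℝ) * B ^ 2 := by rw [nsmul_eq_mul, Finset.card_range]
  rw [h1]
  calc Real.sqrt (∑ i ∈ Finset.range M, (y i) ^ 2)
      ≤ Real.sqrt ((M : ℝ) * B ^ 2) := Real.sqrt_le_sqrt h2
    _ = Real.sqrt M * B := by
        rw [Real.sqrt_mul (Nat.cast_nonneg M), Real.sqrt_sq hB]

/-- Analytic vectors for banded scalar matrices of linear growth: if `Ξ` is a nonnegative
`(2k+1)`-diagonal matrix with `Ξ i j ≤ ξ(i+j)`, then every finitely supported vector `x` is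
analytic for `Ξ` with radius of convergence at least `1/(ξ(4k²+2k))`: for every
`0 ≤ z < 1/(ξ(4k²+2k))` the series `Σ_n zⁿ ‖Ξⁿ x‖₂ / n!` converges. -/
theorem analytic_vectors_of_banded_linear_growth
    (k : ℕ) (hk : 1 ≤ k) (ξ : ℝ) (hξ : 0 < ξ)
    (Ξ : ℕ → ℕ → ℝ)
    (hnn : ∀ i j : ℕ, 0 ≤ Ξ i j)
    (hband : ∀ i j : ℕ, (k : ℤ) < |(i : ℤ) - (j : ℤ)| → Ξ i j = 0)
    (hgrow : ∀ i j : ℕ, Ξ i j ≤ ξ * ((i : ℝ) + (j : ℝ)))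
    (x : ℕ → ℝ) (hx : {j : ℕ | x j ≠ 0}.Finite)
    (z : ℝ) (hz0 : 0 ≤ z) (hz : z < 1 / (ξ * (4 * (k : ℝ) ^ 2 + 2 * (k : ℝ)))) :
    Summable fun n : ℕ => z ^ n * l2Norm ((matVec Ξ)^[n] x) / (n.factorial : ℝ) := by
  classical
  have hk' : (1 : ℝ) ≤ (k : ℝ) := by exact_mod_cast hk
  set M : ℕ := hx.toFinset.sup id + 1 with hM_def
  have hsupp : ∀ j, M ≤ j → x j = 0 := by
    intro j hj
    by_contra h
    have hmem : j ∈ hx.toFinset := by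
      rw [Set.Finite.mem_toFinset]
      exact h
    have := Finset.le_sup (f := id) hmem
    simp only [id_eq] at this
    omega
  set C : ℝ := ∑ j ∈ hx.toFinset, |x j| with hC_def
  have hC0 : 0 ≤ C := Finset.sum_nonneg fun _ _ => abs_nonneg _
  have hbd : ∀ j, |x j| ≤ C := by
    intro j
    by_cases h : x j = 0
    · rw [h, abs_zero]; exact hC0
    · exact Finset.single_le_sum (f := fun j => |x j|) (fun _ _ => abs_nonneg _)
        (by rw [Set.Finite.mem_toFinset]; exact h)
  set c : ℕ := M + k with hc_def
  have hc : 1 ≤ c := by omega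
  clear_value M C c
  have hA : (0 : ℝ) < ξ * (4 * (k : ℝ) ^ 2 + 2 * (k : ℝ)) := by nlinarith
  have hr1 : z * (ξ * (4 * (k : ℝ) ^ 2 + 2 * (k : ℝ))) < 1 := by
    have := (lt_div_iff₀ hA).mp hz
    linarith
  have hr0 : 0 ≤ z * (ξ * (4 * (k : ℝ) ^ 2 + 2 * (k : ℝ))) := by positivity
  -- summability of the majorant
  have hsum : Summable (fun n : ℕ =>
      C * (((n : ℝ) + (c : ℝ)) ^ (c + 1) * (z * (ξ * (4 * (k : ℝ) ^ 2 + 2 * (k : ℝ)))) ^ n)) := by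
    apply Summable.mul_left
    have heq : ∀ n : ℕ, ((n : ℝ) + (c : ℝ)) ^ (c + 1)
        * (z * (ξ * (4 * (k : ℝ) ^ 2 + 2 * (k : ℝ)))) ^ n
        = ∑ i ∈ Finset.range (c + 2), ((c : ℝ) ^ (c + 1 - i) * ((c + 1).choose i))
          * ((n : ℝ) ^ i * (z * (ξ * (4 * (k : ℝ) ^ 2 + 2 * (k : ℝ)))) ^ n) := by
      intro n
      rw [add_pow, Finset.sum_mul]
      apply Finset.sum_congr rfl
      intro i _
      ring
    rw [summable_congr heq]
    apply summable_sum
    intro i _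
    apply Summable.mul_left
    apply summable_pow_mul_geometric_of_norm_lt_one
    rw [Real.norm_eq_abs, abs_of_nonneg hr0]
    exact hr1
  apply Summable.of_nonneg_of_le _ _ hsum
  · intro n
    apply div_nonneg _ (Nat.cast_nonneg _)
    exact mul_nonneg (pow_nonneg hz0 n) (Real.sqrt_nonneg _)
  · intro n
    obtain ⟨hs, hb⟩ := banded_iter k ξ hξ.le Ξ hnn hband hgrow x M C hsupp hbd n
    set P : ℝ := ∏ m ∈ Finset.range n,
      ((2 * (k : ℝ) + 1) * (ξ * (2 * ((M : ℝ) + (m : ℝ) * (k : ℝ)) + (k : ℝ)))) with hP_def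
    have hP0 : 0 ≤ P := Finset.prod_nonneg fun m _ => by positivity
    have hl2 : l2Norm ((matVec Ξ)^[n] x) ≤ Real.sqrt ((M + n * k : ℕ) : ℝ) * (C * P) :=
      l2_bound_aux _ _ _ (by positivity) hs hb
    have hsqrt : Real.sqrt ((M + n * k : ℕ) : ℝ) ≤ (n : ℝ) + (c : ℝ) := by
      rw [show (n : ℝ) + (c : ℝ) = Real.sqrt (((n : ℝ) + (c : ℝ)) ^ 2) from
        (Real.sqrt_sq (by positivity)).symm]
      apply Real.sqrt_le_sqrt
      have hcastc : (c : ℝ) = (M : ℝ) + (k : ℝ) := by rw [hc_def]; push_cast; ring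
      rw [hcastc]
      push_cast
      have hM0 : (0 : ℝ) ≤ (M : ℝ) := Nat.cast_nonneg _
      have hn0 : (0 : ℝ) ≤ (n : ℝ) := Nat.cast_nonneg _
      nlinarith [mul_nonneg hM0 hM0, mul_nonneg hn0 hM0,
        mul_nonneg hM0 (sub_nonneg.mpr hk'), mul_nonneg hn0 (sub_nonneg.mpr hk'),
        sq_nonneg ((k : ℝ) - 1), mul_nonneg hn0 hn0]
    have hP1 : P ≤ (ξ * (4 * (k : ℝ) ^ 2 + 2 * (k : ℝ))) ^ n
        * (((n : ℝ) + (c : ℝ)) ^ c * (n.factorial : ℝ)) := by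
      have step1 : P ≤ ∏ m ∈ Finset.range n,
          ((ξ * (4 * (k : ℝ) ^ 2 + 2 * (k : ℝ))) * ((m : ℝ) + (c : ℝ))) := by
        apply Finset.prod_le_prod
        · intro m _; positivity
        · intro m _
          have hM0 : (0 : ℝ) ≤ (M : ℝ) := Nat.cast_nonneg _
          have hm0 : (0 : ℝ) ≤ (m : ℝ) := Nat.cast_nonneg _
          have hcast : (c : ℝ) = (M : ℝ) + (k : ℝ) := by rw [hc_def]; push_cast; ring
          rw [hcast]
          have key : (2 * (k : ℝ) + 1) * (2 * ((M : ℝ) + (m : ℝ) * (k : ℝ)) + (k : ℝ))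
              ≤ (4 * (k : ℝ) ^ 2 + 2 * (k : ℝ)) * ((m : ℝ) + ((M : ℝ) + (k : ℝ))) := by
            nlinarith [mul_nonneg hM0 (sub_nonneg.mpr hk'), mul_nonneg hm0 hM0,
              mul_nonneg (mul_nonneg hM0 (sub_nonneg.mpr hk')) (by linarith : (0:ℝ) ≤ (k:ℝ)),
              mul_nonneg hm0 (by linarith : (0:ℝ) ≤ (k:ℝ))]
          calc (2 * (k : ℝ) + 1) * (ξ * (2 * ((M : ℝ) + (m : ℝ) * (k : ℝ)) + (k : ℝ)))
              = ξ * ((2 * (k : ℝ) + 1) * (2 * ((M : ℝ) + (m : ℝ) * (k : ℝ)) + (k : ℝ))) := by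
                ring
            _ ≤ ξ * ((4 * (k : ℝ) ^ 2 + 2 * (k : ℝ)) * ((m : ℝ) + ((M : ℝ) + (k : ℝ)))) :=
                mul_le_mul_of_nonneg_left key hξ.le
            _ = ξ * (4 * (k : ℝ) ^ 2 + 2 * (k : ℝ)) * ((m : ℝ) + ((M : ℝ) + (k : ℝ))) := by
                ring
      have step2 : ∏ m ∈ Finset.range n,
          ((ξ * (4 * (k : ℝ) ^ 2 + 2 * (k : ℝ))) * ((m : ℝ) + (c : ℝ)))
          = (ξ * (4 * (k : ℝ) ^ 2 + 2 * (k : ℝ))) ^ n * ∏ m ∈ Finset.range n, ((m : ℝ) + (c : ℝ)) := by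
        rw [Finset.prod_mul_distrib, Finset.prod_const, Finset.card_range]
      have step3 : ∏ m ∈ Finset.range n, ((m : ℝ) + (c : ℝ))
          ≤ ((n : ℝ) + (c : ℝ)) ^ c * (n.factorial : ℝ) := by
        have h1 : ∏ m ∈ Finset.range n, ((m : ℝ) + (c : ℝ))
            = ((∏ m ∈ Finset.range n, (m + c) : ℕ) : ℝ) := by push_cast; rfl
        have h2 := prod_add_le_aux c n hc
        rw [h1]
        calc ((∏ m ∈ Finset.range n, (m + c) : ℕ) : ℝ)
            ≤ (((n + c) ^ c * n.factorial : ℕ) : ℝ) := by exact_mod_cast h2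
          _ = ((n : ℝ) + (c : ℝ)) ^ c * (n.factorial : ℝ) := by push_cast; ring
      calc P ≤ _ := step1
        _ = _ := step2
        _ ≤ (ξ * (4 * (k : ℝ) ^ 2 + 2 * (k : ℝ))) ^ n
            * (((n : ℝ) + (c : ℝ)) ^ c * (n.factorial : ℝ)) := by
          apply mul_le_mul_of_nonneg_left step3 (by positivity)
    have hfac : (0 : ℝ) < (n.factorial : ℝ) := by exact_mod_cast n.factorial_pos
    have hl2' : l2Norm ((matVec Ξ)^[n] x)
        ≤ ((n : ℝ) + (c : ℝ)) * (C * ((ξ * (4 * (k : ℝ) ^ 2 + 2 * (k : ℝ))) ^ n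
          * (((n : ℝ) + (c : ℝ)) ^ c * (n.factorial : ℝ)))) := by
      refine hl2.trans ?_
      apply mul_le_mul hsqrt (mul_le_mul_of_nonneg_left hP1 hC0) (by positivity) (by positivity)
    calc z ^ n * l2Norm ((matVec Ξ)^[n] x) / (n.factorial : ℝ)
        ≤ z ^ n * (((n : ℝ) + (c : ℝ)) * (C * ((ξ * (4 * (k : ℝ) ^ 2 + 2 * (k : ℝ))) ^ n
          * (((n : ℝ) + (c : ℝ)) ^ c * (n.factorial : ℝ))))) / (n.factorial : ℝ) := by
          exact (div_le_div_iff_of_pos_right hfac).mpr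
            (mul_le_mul_of_nonneg_left hl2' (pow_nonneg hz0 n))
      _ = C * (((n : ℝ) + (c : ℝ)) ^ (c + 1)
            * (z * (ξ * (4 * (k : ℝ) ^ 2 + 2 * (k : ℝ)))) ^ n) := by
          rw [div_eq_iff (ne_of_gt hfac)]
          simp only [mul_pow]
          ring
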